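/- Let τ be a continuous distributive triangle function (continuous w.r.t. the Sibley metric) and γ a τ-decomposable measure on a σ-ring Σ continuous from below. For simple non-negative f and a monotone sequence E_n ↗ E in Σ, lim_{n→∞} ∫_{E_n} f dγ = ∫_E f dγ, the limit in the Sibley metric on Δ⁺. -/
import Mathlib


open MeasureTheory Filter Set Topology

noncomputable section

/-- The distribution function of the Dirac measure at 0. -/
def eps0 : ℝ → ℝ := fun x => if 0 < x then 1 else 0

/-- εₐ : the distribution function of the Dirac measure at `a`. -/
def epsAt (a : ℝ) : ℝ → ℝ := fun x => if a < x then 1 else 0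

/-- Distance distribution function: non-decreasing, left-continuous,
vanishing on `(-∞,0]`, with values in `[0,1]` and `sup F = 1`. -/
def IsDDF (F : ℝ → ℝ) : Prop :=
  Monotone F ∧ (∀ x : ℝ, ContinuousWithinAt F (Set.Iio x) x) ∧
  (∀ x ≤ (0:ℝ), F x = 0) ∧ (∀ x, 0 ≤ F x ∧ F x ≤ 1) ∧
  Tendsto F atTop (nhds 1)

/-- Triangle function on Δ⁺: maps Δ⁺ × Δ⁺ into Δ⁺, symmetric, associative,
non-decreasing in each variable, with ε₀ as identity. -/
def IsTriangleFn (τ : (ℝ → ℝ) → (ℝ → ℝ) → (ℝ → ℝ)) : Prop :=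
  (∀ G H, IsDDF G → IsDDF H → IsDDF (τ G H)) ∧
  (∀ G H, τ G H = τ H G) ∧
  (∀ F G H, τ (τ F G) H = τ F (τ G H)) ∧
  (∀ F G H : ℝ → ℝ, F ≤ G → τ F H ≤ τ G H) ∧
  (∀ G, IsDDF G → τ G eps0 = G)

/-- Scalar multiplication `c ⊙ G` on Δ⁺. -/
def smulDDF (c : ℝ) (G : ℝ → ℝ) : ℝ → ℝ := fun x => if c = 0 then eps0 x else G (x / c)

/-- Distributive triangle function: `c ⊙ τ(G,H) = τ(c ⊙ G, c ⊙ H)`. -/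
def IsDistributive (τ : (ℝ → ℝ) → (ℝ → ℝ) → (ℝ → ℝ)) : Prop :=
  ∀ c : ℝ, 0 ≤ c → ∀ G H, smulDDF c (τ G H) = τ (smulDDF c G) (smulDDF c H)

/-- The Sibley (modified Lévy) metric on Δ⁺. -/
def dS (G H : ℝ → ℝ) : ℝ :=
  sInf {h : ℝ | 0 < h ∧ ∀ x ∈ Set.Icc (0:ℝ) (1/h),
    G (x - h) - h ≤ H x ∧ H x ≤ G (x + h) + h}

/-- Iterated τ-sum `⊕_{i} G i` over `Fin n` (empty sum is `ε₀`). -/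
def oplus (τ : (ℝ → ℝ) → (ℝ → ℝ) → (ℝ → ℝ)) : ∀ {n : ℕ}, (Fin n → (ℝ → ℝ)) → (ℝ → ℝ)
  | 0, _ => eps0
  | _ + 1, G => τ (G 0) (oplus τ (fun i => G i.succ))

/-- Partial sums `⊕_{k=0}^{n} G k` of a sequence. -/
def oplusPartial (τ : (ℝ → ℝ) → (ℝ → ℝ) → (ℝ → ℝ)) (G : ℕ → (ℝ → ℝ)) : ℕ → (ℝ → ℝ)
  | 0 => G 0
  | n + 1 => τ (oplusPartial τ G n) (G (n + 1))

/-- A simple non-negative function: finite values on pairwise disjoint measurable sets. -/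
structure SimpleFn (S : Set (Set Ω)) where
  n : ℕ
  c : Fin n → ℝ
  A : Fin n → Set Ω
  hc : ∀ i, 0 ≤ c i
  hA : ∀ i, A i ∈ S
  hdisj : Pairwise (Function.onFun Disjoint A)

def SimpleFn.toFun {Ω : Type*} {S : Set (Set Ω)} (f : SimpleFn S) : Ω → ℝ :=
  fun t => ∑ i, (f.A i).indicator (fun _ => f.c i) t

/-- The γ-integral of a simple function on `E`: `⊕ᵢ xᵢ ⊙ γ_{E∩Eᵢ}`. -/
def SimpleFn.integral {Ω : Type*} {S : Set (Set Ω)} (f : SimpleFn S)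
    (τ : (ℝ → ℝ) → (ℝ → ℝ) → (ℝ → ℝ)) (γ : Set Ω → (ℝ → ℝ)) (E : Set Ω) : ℝ → ℝ :=
  oplus τ (fun i => smulDDF (f.c i) (γ (E ∩ f.A i)))

/-- Left-continuous regularization `𝔊(x) = sup_{x' < x} G(x')`. -/
def lcReg (G : ℝ → ℝ) : ℝ → ℝ := fun x => sSup (G '' Set.Iio x)

/-- `𝔣 ∈ 𝒮_{f,E}` : simple functions below `f` on `E`. -/
def SimpleFn.belowOn {Ω : Type*} {S : Set (Set Ω)} (𝔣 : SimpleFn S)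
    (f : Ω → ENNReal) (E : Set Ω) : Prop :=
  ∀ t ∈ E, ENNReal.ofReal (𝔣.toFun t) ≤ f t

/-- `f` is γ-integrable on `E`: the integrals of simple functions below `f`
are bounded from below by some distance distribution function. -/
def Integrable' {Ω : Type*} {S : Set (Set Ω)}
    (τ : (ℝ → ℝ) → (ℝ → ℝ) → (ℝ → ℝ)) (γ : Set Ω → (ℝ → ℝ))
    (f : Ω → ENNReal) (E : Set Ω) : Prop :=
  ∃ H : ℝ → ℝ, IsDDF H ∧ ∀ 𝔣 : SimpleFn S, 𝔣.belowOn f E → H ≤ 𝔣.integral τ γ E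

/-- The γ-integral `∫_E f dγ` : the infimum in (Δ⁺, ≤) of integrals of simple
functions below `f` on `E` (left-continuous regularization of the pointwise infimum). -/
def probIntegral {Ω : Type*} (S : Set (Set Ω))
    (τ : (ℝ → ℝ) → (ℝ → ℝ) → (ℝ → ℝ)) (γ : Set Ω → (ℝ → ℝ))
    (f : Ω → ENNReal) (E : Set Ω) : ℝ → ℝ :=
  lcReg (fun x => sInf {y | ∃ 𝔣 : SimpleFn S, 𝔣.belowOn f E ∧ 𝔣.integral τ γ E x = y})

open Classical in
/-- The Lebesgue–Stieltjes measure of a monotone function (junk value otherwise). -/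
def lsMeasure (H : ℝ → ℝ) : Measure ℝ :=
  if h : Monotone H then h.stieltjesFunction.measure else 0

/-- Convolution `(G * H)(x) = ∫₀ˣ G(x−t) dH(t)` (Lebesgue–Stieltjes). -/
def conv (G H : ℝ → ℝ) : ℝ → ℝ := fun x =>
  if 0 < x then ∫ t in Set.Icc (0:ℝ) x, G (x - t) ∂(lsMeasure H) else 0

/-- `τ_{L,M}(G,H)(x) = sup_{L(u,v)=x} min(G(u),H(v))`. -/
def tauLM (L : ℝ → ℝ → ℝ) (G H : ℝ → ℝ) : ℝ → ℝ := fun x =>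
  sSup {t | ∃ u v : ℝ, 0 ≤ u ∧ 0 ≤ v ∧ L u v = x ∧ t = min (G u) (H v)}

/-- Pseudo-addition on `[0,∞)`: commutative, associative, jointly strictly
increasing, continuous, with neutral element 0. -/
def IsPseudoAddition (L : ℝ → ℝ → ℝ) : Prop :=
  (∀ u v, 0 ≤ u → 0 ≤ v → L u v = L v u) ∧
  (∀ u v w, 0 ≤ u → 0 ≤ v → 0 ≤ w → L (L u v) w = L u (L v w)) ∧
  (∀ u₁ u₂ v₁ v₂, 0 ≤ u₁ → 0 ≤ v₁ → u₁ < u₂ → v₁ < v₂ → L u₁ v₁ < L u₂ v₂) ∧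
  Continuous (fun p : ℝ × ℝ => L p.1 p.2) ∧
  (∀ u, 0 ≤ u → L 0 u = u ∧ L u 0 = u)

/-- γ is a τ-decomposable measure on the ring S. -/
def IsDecomposable {Ω : Type*} (S : Set (Set Ω))
    (τ : (ℝ → ℝ) → (ℝ → ℝ) → (ℝ → ℝ)) (γ : Set Ω → (ℝ → ℝ)) : Prop :=
  γ ∅ = eps0 ∧ ∀ E F : Set Ω, E ∈ S → F ∈ S → Disjoint E F → γ (E ∪ F) = τ (γ E) (γ F)

/-- γ is continuous from below: `γ_{E_n} → γ_E` weakly (in the Sibley metric)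
whenever `E_n ↗ E`. -/
def ContinuousFromBelow {Ω : Type*} (S : Set (Set Ω)) (γ : Set Ω → (ℝ → ℝ)) : Prop :=
  ∀ E : ℕ → Set Ω, (∀ n, E n ∈ S) → Monotone E → (⋃ n, E n) ∈ S →
    Tendsto (fun n => dS (γ (E n)) (γ (⋃ n, E n))) atTop (nhds 0)

/-- Sequential continuity of a triangle function w.r.t. the Sibley metric. -/
def IsContinuousTriangle (τ : (ℝ → ℝ) → (ℝ → ℝ) → (ℝ → ℝ)) : Prop :=
  ∀ (G H : ℝ → ℝ) (Gn Hn : ℕ → (ℝ → ℝ)), IsDDF G → IsDDF H → (∀ n, IsDDF (Gn n)) →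
    (∀ n, IsDDF (Hn n)) →
    Tendsto (fun n => dS (Gn n) G) atTop (nhds 0) →
    Tendsto (fun n => dS (Hn n) H) atTop (nhds 0) →
    Tendsto (fun n => dS (τ (Gn n) (Hn n)) (τ G H)) atTop (nhds 0)


/-- Auxiliary: the witness set defining `dS`. -/
def dsSet (G H : ℝ → ℝ) : Set ℝ :=
  {h : ℝ | 0 < h ∧ ∀ x ∈ Set.Icc (0:ℝ) (1/h), G (x - h) - h ≤ H x ∧ H x ≤ G (x + h) + h}

lemma dS_eq (G H : ℝ → ℝ) : dS G H = sInf (dsSet G H) := rfl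

lemma dsSet_bddBelow (G H : ℝ → ℝ) : BddBelow (dsSet G H) :=
  ⟨0, fun h hh => hh.1.le⟩

lemma dS_nonneg (G H : ℝ → ℝ) : 0 ≤ dS G H := by
  rcases Set.eq_empty_or_nonempty (dsSet G H) with he | hne
  · rw [dS_eq, he]; simp [Real.sInf_empty]
  · exact le_csInf hne (fun h hh => hh.1.le)

lemma mem_dsSet_of_one_lt {G H : ℝ → ℝ} (hG : ∀ x, 0 ≤ G x ∧ G x ≤ 1)
    (hH : ∀ x, 0 ≤ H x ∧ H x ≤ 1) {h : ℝ} (hh : 1 < h) : h ∈ dsSet G H := by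
  refine ⟨lt_trans one_pos hh, fun x _ => ⟨?_, ?_⟩⟩
  · have := (hG (x - h)).2
    have := (hH x).1
    linarith
  · have := (hG (x + h)).1
    have := (hH x).2
    linarith

lemma dsSet_nonempty {G H : ℝ → ℝ} (hG : ∀ x, 0 ≤ G x ∧ G x ≤ 1)
    (hH : ∀ x, 0 ≤ H x ∧ H x ≤ 1) : (dsSet G H).Nonempty :=
  ⟨2, mem_dsSet_of_one_lt hG hH one_lt_two⟩

lemma mem_dsSet_of_monotone {G : ℝ → ℝ} (hG : Monotone G) {h : ℝ} (hh : 0 < h) :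
    h ∈ dsSet G G := by
  refine ⟨hh, fun x _ => ⟨?_, ?_⟩⟩
  · have := hG (by linarith : x - h ≤ x); linarith
  · have := hG (by linarith : x ≤ x + h); linarith

lemma dS_self_of_monotone {G : ℝ → ℝ} (hG : Monotone G) : dS G G = 0 := by
  refine le_antisymm ?_ (dS_nonneg G G)
  by_contra hpos
  push_neg at hpos
  have h2 : dS G G / 2 ∈ dsSet G G := mem_dsSet_of_monotone hG (by linarith)
  have h3 := csInf_le (dsSet_bddBelow G G) h2
  rw [← dS_eq] at h3
  linarith

lemma isDDF_eps0 : IsDDF eps0 := by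
  refine ⟨?_, ?_, ?_, ?_, ?_⟩
  · intro a b hab
    unfold eps0
    split_ifs with h1 h2 h2 <;> norm_num
    exact absurd (lt_of_lt_of_le h1 hab) h2
  · intro x
    rcases le_or_gt x 0 with hx | hx
    · refine Tendsto.congr' ?_ (tendsto_const_nhds (α := ℝ) (x := eps0 x))
      filter_upwards [self_mem_nhdsWithin] with y (hy : y < x)
      simp [eps0, not_lt.mpr (le_of_lt (lt_of_lt_of_le hy hx)), not_lt.mpr hx]
    · refine Tendsto.congr' ?_ (tendsto_const_nhds (α := ℝ) (x := eps0 x))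
      filter_upwards [mem_nhdsWithin_of_mem_nhds (Ioi_mem_nhds hx)] with y (hy : 0 < y)
      simp [eps0, hy, hx]
  · intro x hx; simp [eps0, not_lt.mpr hx]
  · intro x; unfold eps0; split_ifs <;> norm_num
  · refine Tendsto.congr' ?_ tendsto_const_nhds
    filter_upwards [eventually_gt_atTop 0] with y hy
    simp [eps0, hy]

lemma isDDF_smul {c : ℝ} (hc : 0 ≤ c) {G : ℝ → ℝ} (hG : IsDDF G) :
    IsDDF (smulDDF c G) := by
  rcases eq_or_lt_of_le hc with hc0 | hcpos
  · have : smulDDF c G = eps0 := by funext x; simp [smulDDF, ← hc0]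
    rw [this]; exact isDDF_eps0
  · obtain ⟨hmono, hlc, hzero, hbd, htop⟩ := hG
    have hne : c ≠ 0 := ne_of_gt hcpos
    refine ⟨?_, ?_, ?_, ?_, ?_⟩
    · intro a b hab
      simp only [smulDDF, if_neg hne]
      exact hmono (by gcongr)
    · intro x
      have h1 : ContinuousWithinAt (fun y : ℝ => y / c) (Set.Iio x) x :=
        (continuous_id.div_const c).continuousWithinAt
      have h2 : ContinuousWithinAt G (Set.Iio (x / c)) (x / c) := hlc (x / c)
      have hmaps : Set.MapsTo (fun y : ℝ => y / c) (Set.Iio x) (Set.Iio (x / c)) := by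
        intro y hy
        simp only [Set.mem_Iio] at *
        gcongr
      have hcomp := ContinuousWithinAt.comp (g := G) (f := fun y : ℝ => y / c)
        (t := Set.Iio (x / c)) h2 h1 hmaps
      unfold smulDDF
      simp only [hne, if_false]
      exact hcomp
    · intro x hx
      simp only [smulDDF, hne, if_false]
      exact hzero _ (div_nonpos_of_nonpos_of_nonneg hx hc)
    · intro x; simp only [smulDDF, hne, if_false]; exact hbd _
    · have hdiv : Tendsto (fun y : ℝ => y / c) atTop atTop :=
        tendsto_id.atTop_div_const hcpos
      have htop2 := htop.comp hdiv
      unfold smulDDF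
      simp only [hne, if_false]
      exact htop2

lemma dS_le_of_mem {G H : ℝ → ℝ} {h : ℝ} (hh : h ∈ dsSet G H) : dS G H ≤ h :=
  csInf_le (dsSet_bddBelow G H) hh

/-- Transfer of witnesses under scalar multiplication. -/
lemma smul_mem_dsSet {c : ℝ} (hc : 0 < c) {G H : ℝ → ℝ} (hG : Monotone G)
    {h : ℝ} (hh : h ∈ dsSet G H) :
    max 1 (max c c⁻¹) * h ∈ dsSet (smulDDF c G) (smulDDF c H) := by
  obtain ⟨hhpos, hsand⟩ := hh
  set K : ℝ := max 1 (max c c⁻¹) with hK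
  have hK1 : 1 ≤ K := le_max_left _ _
  have hKc : c ≤ K := le_trans (le_max_left _ _) (le_max_right _ _)
  have hKci : c⁻¹ ≤ K := le_trans (le_max_right _ _) (le_max_right _ _)
  have hKpos : 0 < K := lt_of_lt_of_le one_pos hK1
  have hne : c ≠ 0 := ne_of_gt hc
  have hcK : 1 ≤ c * K := by
    calc (1:ℝ) = c * c⁻¹ := by field_simp
      _ ≤ c * K := by gcongr
  refine ⟨by positivity, fun x hx => ?_⟩
  obtain ⟨hx0, hx1⟩ := hx
  have hy0 : 0 ≤ x / c := div_nonneg hx0 hc.le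
  have hKh : (0:ℝ) < K * h := by positivity
  have hxKh : x * (K * h) ≤ 1 := by
    rw [le_div_iff₀ hKh] at hx1
    exact hx1
  have hy1 : x / c ≤ 1 / h := by
    rw [div_le_div_iff₀ hc hhpos]
    nlinarith
  have hsd := hsand (x / c) ⟨hy0, hy1⟩
  have hda : (x - K * h) / c ≤ x / c - h := by
    rw [sub_div, sub_le_sub_iff_left]
    rw [le_div_iff₀ hc]
    nlinarith
  have hdb : x / c + h ≤ (x + K * h) / c := by
    rw [add_div, add_le_add_iff_left]
    rw [le_div_iff₀ hc]
    nlinarith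
  constructor
  · have h1 : G ((x - K * h) / c) ≤ G (x / c - h) := hG hda
    have h2 : h ≤ K * h := by nlinarith
    simp only [smulDDF, hne, if_false]
    linarith [hsd.1]
  · have h1 : G (x / c + h) ≤ G ((x + K * h) / c) := hG hdb
    have h2 : h ≤ K * h := by nlinarith
    simp only [smulDDF, hne, if_false]
    linarith [hsd.2]

lemma dS_smul_le {c : ℝ} (hc : 0 < c) {G H : ℝ → ℝ} (hGm : Monotone G)
    (hG : ∀ x, 0 ≤ G x ∧ G x ≤ 1) (hH : ∀ x, 0 ≤ H x ∧ H x ≤ 1) :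
    dS (smulDDF c G) (smulDDF c H) ≤ max 1 (max c c⁻¹) * dS G H := by
  set K : ℝ := max 1 (max c c⁻¹) with hK
  have hKpos : 0 < K := lt_of_lt_of_le one_pos (le_max_left _ _)
  have key : ∀ h ∈ dsSet G H, dS (smulDDF c G) (smulDDF c H) / K ≤ h := by
    intro h hh
    rw [div_le_iff₀ hKpos, mul_comm]
    exact dS_le_of_mem (smul_mem_dsSet hc hGm hh)
  have hne : (dsSet G H).Nonempty := dsSet_nonempty hG hH
  have h1 := le_csInf hne key
  rw [div_le_iff₀ hKpos] at h1
  rw [dS_eq G H]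
  linarith

lemma tendsto_dS_smul {c : ℝ} (hc : 0 ≤ c) {G : ℝ → ℝ} {Gn : ℕ → ℝ → ℝ}
    (hG : IsDDF G) (hGn : ∀ n, IsDDF (Gn n))
    (h : Tendsto (fun n => dS (Gn n) G) atTop (nhds 0)) :
    Tendsto (fun n => dS (smulDDF c (Gn n)) (smulDDF c G)) atTop (nhds 0) := by
  rcases eq_or_lt_of_le hc with hc0 | hcpos
  · have heq : ∀ n, smulDDF c (Gn n) = smulDDF c G := by
      intro n; funext x; simp [smulDDF, ← hc0]
    simp only [heq]
    have : dS (smulDDF c G) (smulDDF c G) = 0 :=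
      dS_self_of_monotone (isDDF_smul hc hG).1
    simp [this]
  · have hbound : ∀ n, dS (smulDDF c (Gn n)) (smulDDF c G) ≤
        max 1 (max c c⁻¹) * dS (Gn n) G :=
      fun n => dS_smul_le hcpos (hGn n).1 (hGn n).2.2.2.1 hG.2.2.2.1
    have hlim : Tendsto (fun n => max 1 (max c c⁻¹) * dS (Gn n) G) atTop (nhds 0) := by
      have := h.const_mul (max 1 (max c c⁻¹))
      simpa using this
    exact squeeze_zero (fun n => dS_nonneg _ _) hbound hlim

lemma isDDF_oplus (τ : (ℝ → ℝ) → (ℝ → ℝ) → (ℝ → ℝ)) (hτ : IsTriangleFn τ) :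
    ∀ {n : ℕ} (G : Fin n → ℝ → ℝ), (∀ i, IsDDF (G i)) → IsDDF (oplus τ G) := by
  intro n
  induction n with
  | zero => intro G _; exact isDDF_eps0
  | succ m ih =>
    intro G hG
    exact hτ.1 _ _ (hG 0) (ih _ (fun i => hG i.succ))

lemma tendsto_dS_oplus (τ : (ℝ → ℝ) → (ℝ → ℝ) → (ℝ → ℝ)) (hτ : IsTriangleFn τ)
    (hct : IsContinuousTriangle τ) :
    ∀ {n : ℕ} (G : Fin n → ℝ → ℝ) (Gs : ℕ → Fin n → ℝ → ℝ),
      (∀ i, IsDDF (G i)) → (∀ m i, IsDDF (Gs m i)) →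
      (∀ i, Tendsto (fun m => dS (Gs m i) (G i)) atTop (nhds 0)) →
      Tendsto (fun m => dS (oplus τ (Gs m)) (oplus τ G)) atTop (nhds 0) := by
  intro n
  induction n with
  | zero =>
    intro G Gs _ _ _
    simp only [oplus, dS_self_of_monotone isDDF_eps0.1]
    exact tendsto_const_nhds
  | succ m ih =>
    intro G Gs hG hGs htend
    have hIH := ih (fun i => G i.succ) (fun k i => Gs k i.succ)
      (fun i => hG i.succ) (fun k i => hGs k i.succ) (fun i => htend i.succ)
    exact hct (G 0) (oplus τ (fun i => G i.succ))
      (fun k => Gs k 0) (fun k => oplus τ (fun i => Gs k i.succ))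
      (hG 0) (isDDF_oplus τ hτ _ (fun i => hG i.succ))
      (fun k => hGs k 0)
      (fun k => isDDF_oplus τ hτ _ (fun i => hGs k i.succ))
      (htend 0) hIH

/-- for a continuous distributive triangle function and a
τ-decomposable measure continuous from below, the integral of a simple function
is continuous along E_n ↗ E (limit in the Sibley metric). -/
theorem stmt18 {Ω : Type*} (S : Set (Set Ω))
    (hempty : (∅ : Set Ω) ∈ S)
    (hdiff : ∀ A B : Set Ω, A ∈ S → B ∈ S → A \ B ∈ S)
    (hiUnion : ∀ f : ℕ → Set Ω, (∀ n, f n ∈ S) → (⋃ n, f n) ∈ S)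
    (τ : (ℝ → ℝ) → (ℝ → ℝ) → (ℝ → ℝ)) (hτ : IsTriangleFn τ)
    (hct : IsContinuousTriangle τ) (hd : IsDistributive τ)
    (γ : Set Ω → (ℝ → ℝ)) (hmem : ∀ E ∈ S, IsDDF (γ E)) (hγ : IsDecomposable S τ γ)
    (hcb : ContinuousFromBelow S γ)
    (f : SimpleFn S) (E : ℕ → Set Ω) (hE : ∀ n, E n ∈ S) (hmono : Monotone E) :
    Tendsto (fun n => dS (f.integral τ γ (E n)) (f.integral τ γ (⋃ k, E k)))
      atTop (nhds 0) := by
  have hinter : ∀ B ∈ S, ∀ C ∈ S, B ∩ C ∈ S := by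
    intro B hB C hC
    have hBC : B ∩ C = B \ (B \ C) := by
      ext t; simp only [Set.mem_inter_iff, Set.mem_diff]; tauto
    rw [hBC]; exact hdiff _ _ hB (hdiff _ _ hB hC)
  have hU : (⋃ k, E k) ∈ S := hiUnion E hE
  unfold SimpleFn.integral
  apply tendsto_dS_oplus τ hτ hct
  · intro i
    exact isDDF_smul (f.hc i) (hmem _ (hinter _ hU _ (f.hA i)))
  · intro m i
    exact isDDF_smul (f.hc i) (hmem _ (hinter _ (hE m) _ (f.hA i)))
  · intro i
    apply tendsto_dS_smul (f.hc i) (hmem _ (hinter _ hU _ (f.hA i)))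
      (fun n => hmem _ (hinter _ (hE n) _ (f.hA i)))
    have hmono' : Monotone (fun n => E n ∩ f.A i) :=
      fun a b hab => Set.inter_subset_inter (hmono hab) subset_rfl
    have hUn : (⋃ n, E n ∩ f.A i) = (⋃ k, E k) ∩ f.A i := (Set.iUnion_inter _ _).symm
    have := hcb (fun n => E n ∩ f.A i) (fun n => hinter _ (hE n) _ (f.hA i)) hmono'
      (by rw [hUn]; exact hinter _ hU _ (f.hA i))
    rwa [hUn] at this


end
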